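/- Main theorem, Goodman–Nguyen case: for events E1, H1, E2, H2, E3, H3 with P(Hi) > 0 for i = 1, 2, 3, if E1|H1 ⊑ E3|H3 (i.e., E1∩H1 ⊆ E3∩H3 and E3ᶜ∩H3 ⊆ E1ᶜ∩H1), then the triple conjunction satisfies C3(ω) = C12(ω) for every ω ∈ Ω (where C12 := ⟦(E1|H1)∧(E2|H2)⟧) and x123 = x12; consequently, if x12 > 0, the iterated conditional satisfies ⟦(E3|H3)|((E1|H1)∧(E2|H2))⟧(ω) = 1 for every ω ∈ Ω. -/
import Mathlib


open MeasureTheory Set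
open scoped Classical

noncomputable section

variable {Ω : Type*} [MeasurableSpace Ω]

/-- Indicator (with values in `ℝ`) of a set. -/
def ind (A : Set Ω) : Ω → ℝ := A.indicator 1

/-- Conditional probability `P(A|H) = P(A ∩ H)/P(H)`. -/
def condProb (P : Measure Ω) (A H : Set Ω) : ℝ :=
  (P (A ∩ H)).toReal / (P H).toReal

/-- The (indicator of the) conditional event `A|H`,
`⟦A|H⟧ = 1_{A∩H} + P(A|H)·1_{Hᶜ}`. -/
def condEvent (P : Measure Ω) (A H : Set Ω) : Ω → ℝ :=
  fun ω => ind (A ∩ H) ω + condProb P A H * ind Hᶜ ω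

/-- The prevision `z` of the conjunction `(A|H) ∧ (B|K)`:
`z = E[min(⟦A|H⟧, ⟦B|K⟧)·1_{H∪K}]/P(H∪K)`. -/
def conjPrev (P : Measure Ω) (A H B K : Set Ω) : ℝ :=
  (∫ ω, min (condEvent P A H ω) (condEvent P B K ω) * ind (H ∪ K) ω ∂P) /
    (P (H ∪ K)).toReal

/-- The conjunction `⟦(A|H) ∧ (B|K)⟧ = min(⟦A|H⟧, ⟦B|K⟧)·1_{H∪K} + z·1_{(H∪K)ᶜ}`. -/
def conjCE (P : Measure Ω) (A H B K : Set Ω) : Ω → ℝ :=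
  fun ω => min (condEvent P A H ω) (condEvent P B K ω) * ind (H ∪ K) ω
    + conjPrev P A H B K * ind (H ∪ K)ᶜ ω

/-- The iterated conditional `⟦(B|K)|(A|H)⟧ = ⟦(A|H)∧(B|K)⟧ + μ·(1 − ⟦A|H⟧)`,
with `μ = z / P(A|H)`. -/
def iterCond (P : Measure Ω) (A H B K : Set Ω) : Ω → ℝ :=
  fun ω => conjCE P A H B K ω +
    (conjPrev P A H B K / condProb P A H) * (1 - condEvent P A H ω)

/-- Goodman–Nguyen logical implication between conditional events:
`A|H ⊑ B|K` iff `A∩H ⊆ B∩K` and `Bᶜ∩K ⊆ Aᶜ∩H`. -/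
def GNle (A H B K : Set Ω) : Prop := A ∩ H ⊆ B ∩ K ∧ Bᶜ ∩ K ⊆ Aᶜ ∩ H

/-- Triple conjunction `⟦(E1|H1)∧(E2|H2)∧(E3|H3)⟧`, defined piecewise, except that
on `H1ᶜ∩H2ᶜ∩H3ᶜ` it is set to `0` (it is irrelevant there for computing `x123`). -/
def c3base (P : Measure Ω) (E1 H1 E2 H2 E3 H3 : Set Ω) : Ω → ℝ := fun ω =>
  if ω ∈ E1 ∩ H1 ∩ (E2 ∩ H2) ∩ (E3 ∩ H3) then 1
  else if ω ∈ (E1ᶜ ∩ H1) ∪ (E2ᶜ ∩ H2) ∪ (E3ᶜ ∩ H3) then 0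
  else if ω ∈ H1ᶜ ∩ (E2 ∩ H2) ∩ (E3 ∩ H3) then condProb P E1 H1
  else if ω ∈ H2ᶜ ∩ (E1 ∩ H1) ∩ (E3 ∩ H3) then condProb P E2 H2
  else if ω ∈ H3ᶜ ∩ (E1 ∩ H1) ∩ (E2 ∩ H2) then condProb P E3 H3
  else if ω ∈ H1ᶜ ∩ H2ᶜ ∩ (E3 ∩ H3) then conjPrev P E1 H1 E2 H2
  else if ω ∈ H1ᶜ ∩ H3ᶜ ∩ (E2 ∩ H2) then conjPrev P E1 H1 E3 H3
  else if ω ∈ H2ᶜ ∩ H3ᶜ ∩ (E1 ∩ H1) then conjPrev P E2 H2 E3 H3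
  else 0

/-- The prevision `x123 = E[C3·1_{H1∪H2∪H3}]/P(H1∪H2∪H3)` of the triple conjunction. -/
def x123 (P : Measure Ω) (E1 H1 E2 H2 E3 H3 : Set Ω) : ℝ :=
  (∫ ω, c3base P E1 H1 E2 H2 E3 H3 ω * ind (H1 ∪ H2 ∪ H3) ω ∂P) /
    (P (H1 ∪ H2 ∪ H3)).toReal

/-- The triple conjunction `C3 = ⟦(E1|H1)∧(E2|H2)∧(E3|H3)⟧`, equal to `x123` on
`H1ᶜ∩H2ᶜ∩H3ᶜ` and given piecewise by `c3base` elsewhere. -/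
def c3 (P : Measure Ω) (E1 H1 E2 H2 E3 H3 : Set Ω) : Ω → ℝ := fun ω =>
  if ω ∈ H1ᶜ ∩ H2ᶜ ∩ H3ᶜ then x123 P E1 H1 E2 H2 E3 H3
  else c3base P E1 H1 E2 H2 E3 H3 ω

/-- The iterated conditional `⟦(E3|H3)|((E1|H1)∧(E2|H2))⟧ = C3 + μ·(1 − C12)`,
where `μ = x123/x12` and `C12 = ⟦(E1|H1)∧(E2|H2)⟧`. -/
def iter3 (P : Measure Ω) (E1 H1 E2 H2 E3 H3 : Set Ω) : Ω → ℝ := fun ω =>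
  c3 P E1 H1 E2 H2 E3 H3 ω +
    (x123 P E1 H1 E2 H2 E3 H3 / conjPrev P E1 H1 E2 H2) *
      (1 - conjCE P E1 H1 E2 H2 ω)



/-! ### Auxiliary lemmas -/

lemma ind_apply' (A : Set Ω) (ω : Ω) : ind A ω = if ω ∈ A then 1 else 0 := by
  simp [ind, Set.indicator_apply]

lemma integrable_ind (P : Measure Ω) [IsFiniteMeasure P] {A : Set Ω} (hA : MeasurableSet A) :
    Integrable (ind A) P := (integrable_const (1 : ℝ)).indicator hA

lemma integral_ind (P : Measure Ω) [IsFiniteMeasure P] {A : Set Ω} (hA : MeasurableSet A) :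
    ∫ ω, ind A ω ∂P = (P A).toReal := integral_indicator_one hA

lemma condProb_nonneg (P : Measure Ω) (A H : Set Ω) : 0 ≤ condProb P A H :=
  div_nonneg ENNReal.toReal_nonneg ENNReal.toReal_nonneg

lemma condProb_le_one (P : Measure Ω) [IsFiniteMeasure P] (A H : Set Ω) :
    condProb P A H ≤ 1 := by
  apply div_le_one_of_le₀
  · exact ENNReal.toReal_mono (measure_ne_top _ _) (measure_mono inter_subset_right)
  · exact ENNReal.toReal_nonneg

lemma condProb_mul (P : Measure Ω) [IsFiniteMeasure P] {A H : Set Ω} (h : 0 < P H) :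
    condProb P A H * (P H).toReal = (P (A ∩ H)).toReal :=
  div_mul_cancel₀ _ (ENNReal.toReal_ne_zero.mpr ⟨h.ne', measure_ne_top _ _⟩)

lemma integrable_condEvent (P : Measure Ω) [IsFiniteMeasure P] {A H : Set Ω}
    (hA : MeasurableSet A) (hH : MeasurableSet H) : Integrable (condEvent P A H) P :=
  (integrable_ind P (hA.inter hH)).add ((integrable_ind P hH.compl).const_mul _)

lemma integrable_min_condEvent (P : Measure Ω) [IsFiniteMeasure P] {A H B K : Set Ω}
    (hA : MeasurableSet A) (hH : MeasurableSet H) (hB : MeasurableSet B)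
    (hK : MeasurableSet K) :
    Integrable (fun ω => min (condEvent P A H ω) (condEvent P B K ω)) P :=
  (integrable_condEvent P hA hH).inf (integrable_condEvent P hB hK)

lemma mul_ind_eq_indicator (f : Ω → ℝ) (S : Set Ω) :
    (fun ω => f ω * ind S ω) = S.indicator f := by
  funext ω
  by_cases h : ω ∈ S <;> simp [ind_apply', h, Set.indicator_apply]

lemma toReal_union_split (P : Measure Ω) [IsFiniteMeasure P] {S T : Set Ω}
    (hS : MeasurableSet S) (hT : MeasurableSet T) :
    (P (S ∪ T)).toReal = (P S).toReal + (P (Sᶜ ∩ T)).toReal := by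
  rw [← ENNReal.toReal_add (measure_ne_top _ _) (measure_ne_top _ _)]
  congr 1
  rw [Set.inter_comm Sᶜ T, ← Set.diff_eq,
    ← measure_union disjoint_sdiff_self_right (hT.diff hS), Set.union_diff_self]

lemma condProb_le_GN (P : Measure Ω) [IsFiniteMeasure P] {E1 H1 E3 H3 : Set Ω}
    (hE1 : MeasurableSet E1) (hE3 : MeasurableSet E3)
    (h1 : 0 < P H1) (h3 : 0 < P H3) (hGN : GNle E1 H1 E3 H3) :
    condProb P E1 H1 ≤ condProb P E3 H3 := by
  have hs1 : (P H1).toReal = (P (E1 ∩ H1)).toReal + (P (E1ᶜ ∩ H1)).toReal := by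
    rw [← ENNReal.toReal_add (measure_ne_top _ _) (measure_ne_top _ _)]
    congr 1
    rw [Set.inter_comm E1 H1, Set.inter_comm E1ᶜ H1, ← Set.diff_eq]
    exact (measure_inter_add_diff H1 hE1).symm
  have hs3 : (P H3).toReal = (P (E3 ∩ H3)).toReal + (P (E3ᶜ ∩ H3)).toReal := by
    rw [← ENNReal.toReal_add (measure_ne_top _ _) (measure_ne_top _ _)]
    congr 1
    rw [Set.inter_comm E3 H3, Set.inter_comm E3ᶜ H3, ← Set.diff_eq]
    exact (measure_inter_add_diff H3 hE3).symm
  have ha : (P (E1 ∩ H1)).toReal ≤ (P (E3 ∩ H3)).toReal :=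
    ENNReal.toReal_mono (measure_ne_top _ _) (measure_mono hGN.1)
  have hb : (P (E3ᶜ ∩ H3)).toReal ≤ (P (E1ᶜ ∩ H1)).toReal :=
    ENNReal.toReal_mono (measure_ne_top _ _) (measure_mono hGN.2)
  have hp1 : (0:ℝ) < (P H1).toReal := ENNReal.toReal_pos h1.ne' (measure_ne_top _ _)
  have hp3 : (0:ℝ) < (P H3).toReal := ENNReal.toReal_pos h3.ne' (measure_ne_top _ _)
  rw [condProb, condProb, div_le_div_iff₀ hp1 hp3, hs1, hs3]
  have h0a : (0:ℝ) ≤ (P (E1 ∩ H1)).toReal := ENNReal.toReal_nonneg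
  have h0b : (0:ℝ) ≤ (P (E3ᶜ ∩ H3)).toReal := ENNReal.toReal_nonneg
  nlinarith

lemma condEvent_nonneg (P : Measure Ω) (A H : Set Ω) (ω : Ω) : 0 ≤ condEvent P A H ω := by
  have := condProb_nonneg P A H
  by_cases h1 : ω ∈ A ∩ H <;> by_cases h2 : ω ∈ Hᶜ <;>
    simp [condEvent, ind_apply', h1, h2] <;> positivity

lemma condEvent_le_GN (P : Measure Ω) [IsFiniteMeasure P] {E1 H1 E3 H3 : Set Ω}
    (hE1 : MeasurableSet E1) (hE3 : MeasurableSet E3)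
    (h1 : 0 < P H1) (h3 : 0 < P H3) (hGN : GNle E1 H1 E3 H3) (ω : Ω) :
    condEvent P E1 H1 ω ≤ condEvent P E3 H3 ω := by
  by_cases m1 : ω ∈ H1
  · by_cases e1 : ω ∈ E1
    · have h33 : ω ∈ E3 ∩ H3 := hGN.1 ⟨e1, m1⟩
      simp [condEvent, ind_apply', h33, Set.mem_inter_iff, e1, m1, h33.1, h33.2]
    · have : condEvent P E1 H1 ω = 0 := by
        simp [condEvent, ind_apply', Set.mem_inter_iff, e1, m1]
      rw [this]; exact condEvent_nonneg P E3 H3 ω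
  · have hL : condEvent P E1 H1 ω = condProb P E1 H1 := by
      simp [condEvent, ind_apply', Set.mem_inter_iff, m1]
    by_cases m3 : ω ∈ H3
    · by_cases e3 : ω ∈ E3
      · have : condEvent P E3 H3 ω = 1 := by
          simp [condEvent, ind_apply', Set.mem_inter_iff, e3, m3]
        rw [hL, this]; exact condProb_le_one P E1 H1
      · exact absurd (hGN.2 ⟨e3, m3⟩).2 m1
    · have : condEvent P E3 H3 ω = condProb P E3 H3 := by
        simp [condEvent, ind_apply', Set.mem_inter_iff, m3]
      rw [hL, this]; exact condProb_le_GN P hE1 hE3 h1 h3 hGN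

lemma conjPrev_GN (P : Measure Ω) [IsProbabilityMeasure P] {E1 H1 E3 H3 : Set Ω}
    (hE1 : MeasurableSet E1) (hH1 : MeasurableSet H1)
    (hE3 : MeasurableSet E3) (hH3 : MeasurableSet H3)
    (h1 : 0 < P H1) (h3 : 0 < P H3) (hGN : GNle E1 H1 E3 H3) :
    conjPrev P E1 H1 E3 H3 = condProb P E1 H1 := by
  have key : (fun ω => min (condEvent P E1 H1 ω) (condEvent P E3 H3 ω) * ind (H1 ∪ H3) ω)
      = fun ω => ind (E1 ∩ H1) ω + condProb P E1 H1 * ind (H1ᶜ ∩ H3) ω := by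
    funext ω
    rw [min_eq_left (condEvent_le_GN P hE1 hE3 h1 h3 hGN ω)]
    by_cases m1 : ω ∈ H1 <;> by_cases m3 : ω ∈ H3 <;> by_cases e1 : ω ∈ E1 <;>
      simp [condEvent, ind_apply', m1, m3, e1]
  rw [conjPrev, key,
    integral_add (integrable_ind P (hE1.inter hH1))
      ((integrable_ind P (hH1.compl.inter hH3)).const_mul _),
    integral_ind P (hE1.inter hH1), integral_const_mul, integral_ind P (hH1.compl.inter hH3),
    toReal_union_split P hH1 hH3, ← condProb_mul P h1, ← mul_add, mul_div_assoc, div_self,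
    mul_one]
  have : (0:ℝ) < (P H1).toReal := ENNReal.toReal_pos h1.ne' (measure_ne_top _ _)
  have : (0:ℝ) ≤ (P (H1ᶜ ∩ H3)).toReal := ENNReal.toReal_nonneg
  linarith

lemma c3base_eq (P : Measure Ω) [IsProbabilityMeasure P]
    (E1 H1 E2 H2 E3 H3 : Set Ω)
    (hE1 : MeasurableSet E1) (hH1 : MeasurableSet H1)
    (hE3 : MeasurableSet E3) (hH3 : MeasurableSet H3)
    (h1 : 0 < P H1) (h3 : 0 < P H3)
    (hGN : GNle E1 H1 E3 H3) {ω : Ω} (hω : ω ∈ H1 ∪ H2 ∪ H3) :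
    c3base P E1 H1 E2 H2 E3 H3 ω = conjCE P E1 H1 E2 H2 ω := by
  have h01 := condProb_nonneg P E1 H1
  have h11 := condProb_le_one P E1 H1
  have h02 := condProb_nonneg P E2 H2
  have h12 := condProb_le_one P E2 H2
  have h13 := conjPrev_GN P hE1 hH1 hE3 hH3 h1 h3 hGN
  have hm1 : min (condProb P E1 H1) 1 = condProb P E1 H1 := min_eq_left h11
  have hm2 : min 1 (condProb P E2 H2) = condProb P E2 H2 := min_eq_right h12
  have hm3 : min (condProb P E1 H1) 0 = 0 := min_eq_right h01
  have hm4 : min (0:ℝ) (condProb P E2 H2) = 0 := min_eq_left h02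
  have hg1 : ∀ _ : ω ∈ E1, ∀ _ : ω ∈ H1, ω ∈ E3 ∧ ω ∈ H3 := fun a b => hGN.1 ⟨a, b⟩
  have hg2 : ∀ _ : ω ∉ E3, ∀ _ : ω ∈ H3, ω ∉ E1 ∧ ω ∈ H1 := fun a b => hGN.2 ⟨a, b⟩
  by_cases m1 : ω ∈ H1 <;> by_cases e1 : ω ∈ E1 <;> by_cases m2 : ω ∈ H2 <;>
    by_cases e2 : ω ∈ E2 <;> by_cases m3 : ω ∈ H3 <;> by_cases e3 : ω ∈ E3 <;>
    simp_all [c3base, conjCE, condEvent, ind_apply']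

lemma x123_eq (P : Measure Ω) [IsProbabilityMeasure P]
    (E1 H1 E2 H2 E3 H3 : Set Ω)
    (hE1 : MeasurableSet E1) (hH1 : MeasurableSet H1)
    (hE2 : MeasurableSet E2) (hH2 : MeasurableSet H2)
    (hE3 : MeasurableSet E3) (hH3 : MeasurableSet H3)
    (h1 : 0 < P H1) (h3 : 0 < P H3) (hGN : GNle E1 H1 E3 H3) :
    x123 P E1 H1 E2 H2 E3 H3 = conjPrev P E1 H1 E2 H2 := by
  have key : (fun ω => c3base P E1 H1 E2 H2 E3 H3 ω * ind (H1 ∪ H2 ∪ H3) ω)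
      = fun ω => min (condEvent P E1 H1 ω) (condEvent P E2 H2 ω) * ind (H1 ∪ H2) ω
          + conjPrev P E1 H1 E2 H2 * ind ((H1 ∪ H2)ᶜ ∩ H3) ω := by
    funext ω
    by_cases hu : ω ∈ H1 ∪ H2 ∪ H3
    · have hone : ind (H1 ∪ H2 ∪ H3) ω = 1 := by simp [ind_apply', hu]
      rw [hone, mul_one, c3base_eq P E1 H1 E2 H2 E3 H3 hE1 hH1 hE3 hH3 h1 h3 hGN hu,
        conjCE]
      by_cases h12 : ω ∈ H1 ∪ H2
      · have hne : ¬ (ω ∉ H1 ∧ ω ∉ H2) := by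
          rcases h12 with a | a
          exacts [fun hc => hc.1 a, fun hc => hc.2 a]
        simp [ind_apply', h12, hne]
      · have hh3 : ω ∈ H3 := by
          rcases hu with h | h
          · exact absurd h h12
          · exact h
        have hn1 : ω ∉ H1 := fun a => h12 (Or.inl a)
        have hn2 : ω ∉ H2 := fun a => h12 (Or.inr a)
        simp [ind_apply', h12, hh3, hn1, hn2]
    · have hnu : ω ∉ H1 ∪ H2 := fun h => hu (Or.inl h)
      have hn3 : ω ∉ H3 := fun h => hu (Or.inr h)
      simp [ind_apply', hu, hnu, hn3]
  have hint1 : Integrable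
      (fun ω => min (condEvent P E1 H1 ω) (condEvent P E2 H2 ω) * ind (H1 ∪ H2) ω) P := by
    rw [mul_ind_eq_indicator]
    exact (integrable_min_condEvent P hE1 hH1 hE2 hH2).indicator (hH1.union hH2)
  have hP12pos : (0:ℝ) < (P (H1 ∪ H2)).toReal :=
    ENNReal.toReal_pos (lt_of_lt_of_le h1 (measure_mono subset_union_left)).ne'
      (measure_ne_top _ _)
  have hmin_int : ∫ ω, min (condEvent P E1 H1 ω) (condEvent P E2 H2 ω) * ind (H1 ∪ H2) ω ∂P
      = conjPrev P E1 H1 E2 H2 * (P (H1 ∪ H2)).toReal := by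
    rw [conjPrev, div_mul_cancel₀ _ hP12pos.ne']
  have h0c : (0:ℝ) ≤ (P ((H1 ∪ H2)ᶜ ∩ H3)).toReal := ENNReal.toReal_nonneg
  rw [x123, key,
    integral_add hint1 ((integrable_ind P ((hH1.union hH2).compl.inter hH3)).const_mul _),
    hmin_int, integral_const_mul, integral_ind P ((hH1.union hH2).compl.inter hH3),
    toReal_union_split P (hH1.union hH2) hH3, ← mul_add, mul_div_assoc, div_self, mul_one]
  linarith


/-- Main theorem, Goodman–Nguyen case `E1|H1 ⊑ E3|H3`: the triple conjunction
`C3` coincides pointwise with `C12 = ⟦(E1|H1)∧(E2|H2)⟧` and `x123 = x12`;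
consequently, if `x12 > 0`, the iterated conditional
`⟦(E3|H3)|((E1|H1)∧(E2|H2))⟧` is constantly `1`. -/
theorem main_case_GN (P : Measure Ω) [IsProbabilityMeasure P]
    (E1 H1 E2 H2 E3 H3 : Set Ω)
    (hE1 : MeasurableSet E1) (hH1 : MeasurableSet H1)
    (hE2 : MeasurableSet E2) (hH2 : MeasurableSet H2)
    (hE3 : MeasurableSet E3) (hH3 : MeasurableSet H3)
    (h1 : 0 < P H1) (h2 : 0 < P H2) (h3 : 0 < P H3)
    (hGN : GNle E1 H1 E3 H3) :
    (∀ ω, c3 P E1 H1 E2 H2 E3 H3 ω = conjCE P E1 H1 E2 H2 ω) ∧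
      x123 P E1 H1 E2 H2 E3 H3 = conjPrev P E1 H1 E2 H2 ∧
      (0 < conjPrev P E1 H1 E2 H2 →
        ∀ ω, iter3 P E1 H1 E2 H2 E3 H3 ω = 1)  := by
  have hc3 : ∀ ω, c3 P E1 H1 E2 H2 E3 H3 ω = conjCE P E1 H1 E2 H2 ω := by
    intro ω
    by_cases h : ω ∈ H1ᶜ ∩ H2ᶜ ∩ H3ᶜ
    · have h12 : ω ∉ H1 ∪ H2 := by
        rintro (a | a)
        exacts [h.1.1 a, h.1.2 a]
      have hn1 : ω ∉ H1 := fun a => h12 (Or.inl a)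
      have hn2 : ω ∉ H2 := fun a => h12 (Or.inr a)
      have hCE : conjCE P E1 H1 E2 H2 ω = conjPrev P E1 H1 E2 H2 := by
        simp [conjCE, ind_apply', h12, hn1, hn2]
      rw [c3, if_pos h, hCE]
      exact x123_eq P E1 H1 E2 H2 E3 H3 hE1 hH1 hE2 hH2 hE3 hH3 h1 h3 hGN
    · have hu : ω ∈ H1 ∪ H2 ∪ H3 := by
        by_contra hn
        exact h ⟨⟨fun a => hn (Or.inl (Or.inl a)), fun a => hn (Or.inl (Or.inr a))⟩,
          fun a => hn (Or.inr a)⟩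
      rw [c3, if_neg h]
      exact c3base_eq P E1 H1 E2 H2 E3 H3 hE1 hH1 hE3 hH3 h1 h3 hGN hu
  have hx : x123 P E1 H1 E2 H2 E3 H3 = conjPrev P E1 H1 E2 H2 :=
    x123_eq P E1 H1 E2 H2 E3 H3 hE1 hH1 hE2 hH2 hE3 hH3 h1 h3 hGN
  refine ⟨hc3, hx, fun hpos ω => ?_⟩
  rw [iter3, hc3 ω, hx, div_self hpos.ne']
  ring


end
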